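/- arXiv:1210.4190 — 2 statements merged into one kernel-verified Lean document; each statement's English description precedes it below -/
import Mathlib

section
/- Let p be a prime number and let K be a p-adic field, i.e. a finite field extension of ℚ_p. For every integer n ≥ 1, the set of monic irreducible polynomials of degree n in K[X] is infinite. -/
open Polynomial

set_option synthInstance.maxHeartbeats 1000000 in
theorem aux_padic_infinite_irreducible (p : ℕ) [Fact p.Prime] (K : Type*) [Field K]
    [Algebra ℚ_[p] K] [FiniteDimensional ℚ_[p] K] [Algebra ℤ_[p] K]
    [IsScalarTower ℤ_[p] ℚ_[p] K] (n : ℕ) (hn : 1 ≤ n) :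
    {f : Polynomial K | f.Monic ∧ Irreducible f ∧ f.natDegree = n}.Infinite := by
  haveI : CharZero K := charZero_of_injective_algebraMap (algebraMap ℚ_[p] K).injective
  set R := integralClosure ℤ_[p] K with hR
  haveI : IsDedekindDomain R := integralClosure.isDedekindDomain ℤ_[p] ℚ_[p] K
  haveI : IsFractionRing R K := integralClosure.isFractionRing_of_finite_extension ℚ_[p] K
  haveI : CharZero R := ⟨fun a b h => by
    have h2 := congrArg (algebraMap R K) h
    rw [map_natCast, map_natCast] at h2
    exact Nat.cast_injective h2⟩
  have hp1 : 1 < p := (Fact.out : p.Prime).one_lt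
  -- `p` is not a unit in `R`
  have hpu : ¬ IsUnit ((p : ℕ) : R) := by
    intro h
    obtain ⟨u, hu⟩ := h
    set t : R := ((u⁻¹ : Rˣ) : R) with ht
    have hm : ((p : ℕ) : R) * t = 1 := by rw [ht, ← hu, Units.mul_inv]
    have hmK : ((p : ℕ) : K) * algebraMap R K t = 1 := by
      have := congrArg (algebraMap R K) hm
      rwa [map_mul, map_natCast, map_one] at this
    have hpK : ((p : ℕ) : K) ≠ 0 := Nat.cast_ne_zero.mpr (Fact.out : p.Prime).ne_zero
    have htK : algebraMap R K t = algebraMap ℚ_[p] K (((p : ℕ) : ℚ_[p])⁻¹) := by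
      rw [map_inv₀, map_natCast]
      field_simp at hmK ⊢
      linear_combination hmK
    have hint : IsIntegral ℤ_[p] (algebraMap ℚ_[p] K (((p : ℕ) : ℚ_[p])⁻¹)) := by
      rw [← htK]; exact t.2
    rw [isIntegral_algebraMap_iff (algebraMap ℚ_[p] K).injective] at hint
    obtain ⟨y, hy⟩ := IsIntegrallyClosed.isIntegral_iff.mp hint
    have hnorm : ‖algebraMap ℤ_[p] ℚ_[p] y‖ ≤ 1 := y.norm_le_one
    rw [hy, norm_inv] at hnorm
    have : ‖((p : ℕ) : ℚ_[p])‖ = (p : ℝ)⁻¹ := by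
      simpa using padicNormE.norm_p (p := p)
    rw [this, inv_inv] at hnorm
    exact absurd hnorm (by push_cast; exact not_le.mpr (by exact_mod_cast hp1))
  -- a maximal ideal containing `p`
  obtain ⟨P, hPmax, hPp⟩ := (Ideal.span {((p : ℕ) : R)}).exists_le_maximal
    (by simpa [Ideal.span_singleton_eq_top] using hpu)
  haveI := hPmax.isPrime
  have hpP : ((p : ℕ) : R) ∈ P := hPp (Ideal.subset_span rfl)
  have hP0 : P ≠ ⊥ := by
    intro h
    rw [h, Ideal.mem_bot] at hpP
    exact (Nat.cast_ne_zero.mpr (Fact.out : p.Prime).ne_zero) hpP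
  -- a uniformizer-like element
  have hlt : P ^ 2 < P := Ideal.pow_lt_self P hP0 hPmax.ne_top 2 le_rfl
  obtain ⟨π, hπP, hπ2⟩ := SetLike.exists_of_lt hlt
  have hπ0 : π ≠ 0 := fun h => hπ2 (h ▸ (P ^ 2).zero_mem)
  have hπsq : π ^ 2 ∈ P ^ 2 := Ideal.pow_mem_pow hπP 2
  set c : ℕ → R := fun m => π + π ^ 2 * (m : R) with hc
  have hcP : ∀ m, c m ∈ P := fun m =>
    P.add_mem hπP (Ideal.pow_le_self two_ne_zero ((P ^ 2).mul_mem_right _ hπsq))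
  have hcP2 : ∀ m, c m ∉ P ^ 2 := by
    intro m h
    have : (c m) - π ^ 2 * (m : R) ∈ P ^ 2 := (P ^ 2).sub_mem h ((P ^ 2).mul_mem_right _ hπsq)
    simp only [hc, add_sub_cancel_right] at this
    exact hπ2 this
  have hcinj : Function.Injective c := by
    intro a b h
    simp only [hc] at h
    have := add_left_cancel h
    have := mul_left_cancel₀ (pow_ne_zero 2 hπ0) this
    exact_mod_cast this
  -- the Eisenstein polynomials
  have hmonic : ∀ m, (X ^ n + C (c m) : R[X]).Monic := fun m =>
    monic_X_pow_add_C _ (by omega)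
  have hdeg : ∀ m, (X ^ n + C (c m) : R[X]).natDegree = n := fun m => natDegree_X_pow_add_C
  have hEis : ∀ m, (X ^ n + C (c m) : R[X]).IsEisensteinAt P := fun m =>
    { leading := by
        rw [(hmonic m).leadingCoeff]
        exact (Ideal.ne_top_iff_one P).mp hPmax.ne_top
      mem := by
        intro i hi
        rw [hdeg m] at hi
        rw [coeff_add, coeff_X_pow, if_neg (by omega : ¬ i = n)]
        rcases eq_or_ne i 0 with h0 | h0
        · rw [h0, coeff_C, if_pos rfl, zero_add]; exact hcP m
        · rw [coeff_C, if_neg h0, add_zero]; exact P.zero_mem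
      notMem := by
        rw [coeff_add, coeff_X_pow, if_neg (by omega : ¬ 0 = n), coeff_C, if_pos rfl, zero_add]
        exact hcP2 m }
  have hirrR : ∀ m, Irreducible (X ^ n + C (c m) : R[X]) := fun m =>
    (hEis m).irreducible hPmax.isPrime (hmonic m).isPrimitive (by rw [hdeg m]; omega)
  have hirrK : ∀ m, Irreducible (X ^ n + C (algebraMap R K (c m)) : K[X]) := by
    intro m
    have := ((hmonic m).irreducible_iff_irreducible_map_fraction_map (K := K)).mp (hirrR m)
    rwa [Polynomial.map_add, Polynomial.map_pow, map_X, map_C] at this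
  apply Set.infinite_of_injective_forall_mem
    (f := fun m : ℕ => (X ^ n + C (algebraMap R K (c m)) : K[X]))
  · intro a b h
    simp only [add_right_inj, C_inj] at h
    exact hcinj (IsFractionRing.injective R K h)
  · intro m
    exact ⟨monic_X_pow_add_C _ (by omega), hirrK m, natDegree_X_pow_add_C⟩

/-- Over a `p`-adic field `K` (a finite extension of `ℚ_p`), for every `n ≥ 1` the set of
monic irreducible polynomials of degree `n` in `K[X]` is infinite. -/
theorem infinite_monic_irreducible_of_padic_field
    (p : ℕ) [Fact p.Prime] (K : Type*) [Field K] [Algebra ℚ_[p] K]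
    [FiniteDimensional ℚ_[p] K] (n : ℕ) (hn : 1 ≤ n) :
    {f : Polynomial K | f.Monic ∧ Irreducible f ∧ f.natDegree = n}.Infinite := by
  letI : Algebra ℤ_[p] K := ((algebraMap ℚ_[p] K).comp (algebraMap ℤ_[p] ℚ_[p])).toAlgebra
  haveI : IsScalarTower ℤ_[p] ℚ_[p] K := IsScalarTower.of_algebraMap_eq fun x => rfl
  exact aux_padic_infinite_irreducible p K n hn
end

section
/- Let k be a number field, let S be a finite set of finite places of k, and let v₀ be a finite place of k not in S. For a finite place v denote by k_v the completion of k at v and by ‖·‖_v the associated absolute value. Let g ∈ k[X] be a monic nonconstant polynomial all of whose coefficients satisfy ‖coeff_j(g)‖_w ≤ 1 for every finite place w ∉ S ∪ {v₀}, and let d ≥ deg g be an integer. Suppose given, for each v ∈ S, a polynomial h_v ∈ k_v[X] of degree at most d that is divisible by g in k_v[X], and let ε > 0. Then there exists h ∈ k[X] of degree at most d, divisible by g in k[X], such that ‖coeff_j(h)‖_w ≤ 1 for every j and every finite place w ∉ S ∪ {v₀}, and ‖coeff_j(h) − coeff_j(h_v)‖_v < ε for every j and every v ∈ S. -/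
open scoped Multiplicative

open IsDedekindDomain

local notation "ℤₘ₀" => WithZero (Multiplicative ℤ)

private lemma zm0_exists_nat_lt (γ : ℤₘ₀) (hγ : 0 < γ) :
    ∃ n : ℕ, ((Multiplicative.ofAdd (-(n : ℤ)) : Multiplicative ℤ) : ℤₘ₀) < γ := by
  obtain ⟨u, rfl⟩ : ∃ u, _ = γ := ⟨WithZero.unzero hγ.ne', WithZero.coe_unzero hγ.ne'⟩
  refine ⟨(Multiplicative.toAdd u).natAbs + 1, ?_⟩
  rw [WithZero.coe_lt_coe, ← ofAdd_toAdd u, Multiplicative.ofAdd_lt, toAdd_ofAdd]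
  omega

private lemma zm0_exists_eq_neg_nat (γ : ℤₘ₀) (h0 : γ ≠ 0) (h1 : γ ≤ 1) :
    ∃ n : ℕ, γ = ((Multiplicative.ofAdd (-(n : ℤ)) : Multiplicative ℤ) : ℤₘ₀) := by
  obtain ⟨u, rfl⟩ : ∃ u, _ = γ := ⟨WithZero.unzero h0, WithZero.coe_unzero h0⟩
  have hu : Multiplicative.toAdd u ≤ 0 := by
    have h : u ≤ 1 := by exact_mod_cast h1
    simpa [← Multiplicative.toAdd_le] using h
  refine ⟨(Multiplicative.toAdd u).natAbs, ?_⟩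
  rw [WithZero.coe_inj, ← ofAdd_toAdd u]
  simp only [toAdd_ofAdd]
  congr 1
  omega

lemma scalar_strong_approx {R : Type*} [CommRing R] [IsDedekindDomain R]
    {K : Type*} [Field K] [Algebra R K] [IsFractionRing R K]
    (S : Finset (HeightOneSpectrum R))
    (x : (v : HeightOneSpectrum R) → v.adicCompletion K)
    (ε : HeightOneSpectrum R → ℤₘ₀) (hε : ∀ v, 0 < ε v) :
    ∃ a : K, (∀ w, w ∉ S → w.valuation K a ≤ 1) ∧
      ∀ v ∈ S, Valued.v (algebraMap K (v.adicCompletion K) a - x v) < ε v := by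
  classical
  -- Step 1: density of K in each completion
  have hy : ∀ v : HeightOneSpectrum R, ∃ y : K,
      Valued.v (algebraMap K (v.adicCompletion K) y - x v) < ε v := by
    intro v
    have hne : ε v ≠ 0 := (hε v).ne'
    have hball : {z : v.adicCompletion K | Valued.v (z - x v) < (Units.mk0 _ hne : ℤₘ₀ˣ)}
        ∈ nhds (x v) := by
      obtain ⟨N, hN⟩ := zm0_exists_nat_lt _ (hε v)
      obtain ⟨π, hπ⟩ := v.valuation_exists_uniformizer K
      have ht : Valued.v (algebraMap K (v.adicCompletion K) (π ^ N)) =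
          ((Multiplicative.ofAdd (-(N : ℤ)) : Multiplicative ℤ) : ℤₘ₀) := by
        rw [HeightOneSpectrum.algebraMap_adicCompletion]
        refine (HeightOneSpectrum.valuedAdicCompletion_eq_valuation' v (π ^ N)).trans ?_
        rw [map_pow, hπ, ← WithZero.exp_nsmul]
        simp [WithZero.exp]
      have h0 : Valued.v.restrict (algebraMap K (v.adicCompletion K) (π ^ N)) ≠ 0 := by
        rw [← pos_iff_ne_zero, Valuation.restrict_pos_iff, ht]
        exact WithZero.zero_lt_coe _
      refine Valued.mem_nhds.mpr ⟨Units.mk0 _ h0, fun y hy => ?_⟩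
      simp only [Set.mem_setOf_eq, Units.val_mk0, Valuation.restrict_lt_iff] at hy ⊢
      rw [ht] at hy
      exact hy.trans hN
    have hdense : x v ∈ closure (Set.range (algebraMap K (v.adicCompletion K))) :=
      HeightOneSpectrum.denseRange_algebraMap K v (x v)
    obtain ⟨z, hz, ⟨y, rfl⟩⟩ := mem_closure_iff_nhds.mp hdense _ hball
    exact ⟨y, hz⟩
  choose y hy using hy
  -- Step 2: common denominator
  obtain ⟨b, hb⟩ := IsLocalization.exist_integer_multiples (nonZeroDivisors R) S y
  have hb0 : (b : R) ≠ 0 := nonZeroDivisors.ne_zero b.2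
  have hr : ∀ v : HeightOneSpectrum R, ∃ rv : R,
      v ∈ S → algebraMap R K rv = (b : R) • y v := by
    intro v
    by_cases h : v ∈ S
    · exact (hb v h).imp fun rv hrv => fun _ => hrv
    · exact ⟨0, fun h' => absurd h' h⟩
  choose r hr using hr
  -- Step 3: the finite set of primes dividing b
  have hspan : Ideal.span {(b : R)} ≠ 0 := by
    simpa [Submodule.zero_eq_bot, Ideal.span_singleton_eq_bot] using hb0
  set T : Finset (HeightOneSpectrum R) := (Ideal.finite_factors hspan).toFinset with hT
  -- exponents
  have hbv : ∀ w : HeightOneSpectrum R, w.intValuation (b : R) ≠ 0 :=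
    fun w => w.intValuation_ne_zero _ hb0
  have hn : ∀ v : HeightOneSpectrum R, ∃ nv : ℕ,
      ((Multiplicative.ofAdd (-(nv : ℤ)) : Multiplicative ℤ) : ℤₘ₀)
        < ε v * v.intValuation (b : R) := fun v =>
    zm0_exists_nat_lt _ (zero_lt_iff.mpr (mul_ne_zero (hε v).ne' (hbv v)))
  choose n hn using hn
  have hm : ∀ w : HeightOneSpectrum R, ∃ mw : ℕ,
      w.intValuation (b : R) = ((Multiplicative.ofAdd (-(mw : ℤ)) : Multiplicative ℤ) : ℤₘ₀) :=
    fun w => zm0_exists_eq_neg_nat _ (hbv w) (w.intValuation_le_one _)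
  choose m hm using hm
  -- Step 4: CRT
  obtain ⟨c, hc⟩ := IsDedekindDomain.exists_forall_sub_mem_ideal
    (s := S ∪ T) (fun w => w.asIdeal) (fun w => if w ∈ S then n w else m w)
    (fun w _ => w.prime)
    (fun w _ w' _ hne h => hne (HeightOneSpectrum.ext h))
    (fun w => if (w : HeightOneSpectrum R) ∈ S then r w else 0)
  set a : K := algebraMap R K c / algebraMap R K (b : R) with ha
  have hbK : algebraMap R K (b : R) ≠ 0 :=
    (map_ne_zero_iff _ (IsFractionRing.injective R K)).mpr hb0
  have hval : ∀ w : HeightOneSpectrum R,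
      w.valuation K a = w.intValuation c / w.intValuation (b : R) := by
    intro w
    rw [ha, Valuation.map_div, w.valuation_of_algebraMap, w.valuation_of_algebraMap]
  refine ⟨a, ?_, ?_⟩
  · -- integrality outside S
    intro w hwS
    rw [hval w, div_le_one₀ (lt_of_le_of_ne' bot_le (hbv w))]
    by_cases hwT : w ∈ T
    · have hmem : c ∈ w.asIdeal ^ m w := by
        simpa [hwS] using hc w (Finset.mem_union_right _ hwT)
      have : w.intValuation c ≤
          ((Multiplicative.ofAdd (-(m w : ℤ)) : Multiplicative ℤ) : ℤₘ₀) := by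
        exact (IsDedekindDomain.HeightOneSpectrum.intValuation_le_pow_iff_mem _ _ _).mpr hmem
      exact this.trans_eq (hm w).symm
    · have h1 : w.intValuation (b : R) = 1 := by
        have hle := w.intValuation_le_one (b : R)
        rcases lt_or_eq_of_le hle with hlt | heq
        · exfalso
          apply hwT
          rw [hT, Set.Finite.mem_toFinset]
          exact (IsDedekindDomain.HeightOneSpectrum.intValuation_lt_one_iff_dvd _ _).mp hlt
        · exact heq
      rw [h1]
      exact w.intValuation_le_one c
  · -- approximation at v ∈ S
    intro v hvS
    have hkey : v.valuation K (a - y v) < ε v := by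
      have hyv : y v = algebraMap R K (r v) / algebraMap R K (b : R) := by
        rw [hr v hvS, Algebra.smul_def]
        field_simp
      have hsub : a - y v = algebraMap R K (c - r v) / algebraMap R K (b : R) := by
        rw [ha, hyv, div_sub_div_same, ← map_sub]
      rw [hsub, Valuation.map_div, v.valuation_of_algebraMap, v.valuation_of_algebraMap,
        div_lt_iff₀ (lt_of_le_of_ne' bot_le (hbv v))]
      have hmem : c - r v ∈ v.asIdeal ^ n v := by
        simpa [hvS] using hc v (Finset.mem_union_left _ hvS)
      have hle : v.intValuation (c - r v) ≤
          ((Multiplicative.ofAdd (-(n v : ℤ)) : Multiplicative ℤ) : ℤₘ₀) := by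
        exact (IsDedekindDomain.HeightOneSpectrum.intValuation_le_pow_iff_mem _ _ _).mpr hmem
      exact hle.trans_lt (hn v)
    have heq : algebraMap K (v.adicCompletion K) a - x v =
        algebraMap K (v.adicCompletion K) (a - y v)
          + (algebraMap K (v.adicCompletion K) (y v) - x v) := by
      rw [(algebraMap K (v.adicCompletion K)).map_sub]; ring
    rw [heq]
    refine lt_of_le_of_lt (Valuation.map_add _ _ _) (max_lt ?_ (hy v))
    have : Valued.v (algebraMap K (v.adicCompletion K) (a - y v)) = v.valuation K (a - y v) := by
      rw [IsDedekindDomain.HeightOneSpectrum.algebraMap_adicCompletion]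
      exact IsDedekindDomain.HeightOneSpectrum.valuedAdicCompletion_eq_valuation' v (a - y v)
    rw [this]
    exact hkey

/-- Strong approximation for spaces of polynomials over a number field: given a finite set `S` of
finite places, an extra finite place `v₀ ∉ S`, a monic nonconstant polynomial `g` with coefficients
integral outside `S ∪ {v₀}`, an integer `d ≥ deg g`, local polynomials `h v` of degree at most `d`
divisible by `g` for `v ∈ S`, and `ε v > 0`, there is a global polynomial `h` of degree at most
`d`, divisible by `g`, with coefficients integral outside `S ∪ {v₀}` and `ε`-close to `h v`
coefficientwise for every `v ∈ S`. -/
theorem strong_approximation_polynomials_divisible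
    (k : Type*) [Field k] [NumberField k]
    (S : Finset (HeightOneSpectrum (NumberField.RingOfIntegers k)))
    (v₀ : HeightOneSpectrum (NumberField.RingOfIntegers k)) (hv₀ : v₀ ∉ S)
    (g : Polynomial k) (hgm : g.Monic) (hgdeg : 0 < g.natDegree)
    (hgint : ∀ j, ∀ w, w ∉ S → w ≠ v₀ → w.valuation k (g.coeff j) ≤ 1)
    (d : ℕ) (hd : g.natDegree ≤ d)
    (hloc : ∀ v ∈ S, Polynomial (v.adicCompletion k))
    (hlocdeg : ∀ v (hv : v ∈ S), (hloc v hv).degree ≤ (d : ℕ))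
    (hlocdvd : ∀ v (hv : v ∈ S), g.map (algebraMap k (v.adicCompletion k)) ∣ hloc v hv)
    (ε : ∀ v ∈ S, WithZero (Multiplicative ℤ)) (hε : ∀ v (hv : v ∈ S), 0 < ε v hv) :
    ∃ h : Polynomial k, h.degree ≤ (d : ℕ) ∧ g ∣ h ∧
      (∀ j, ∀ w, w ∉ S → w ≠ v₀ → w.valuation k (h.coeff j) ≤ 1) ∧
      ∀ v (hv : v ∈ S), ∀ j,
        Valued.v (algebraMap k (v.adicCompletion k) (h.coeff j) - (hloc v hv).coeff j)
          < ε v hv := by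
  classical
  set m : ℕ := d - g.natDegree with hm
  -- local quotients
  have hqv : ∀ v (hv : v ∈ S), ∃ qv : Polynomial (v.adicCompletion k),
      hloc v hv = g.map (algebraMap k (v.adicCompletion k)) * qv ∧
      ∀ l, m < l → qv.coeff l = 0 := by
    intro v hv
    obtain ⟨qv, hq⟩ := hlocdvd v hv
    refine ⟨qv, hq, fun l hl => ?_⟩
    by_cases h0 : qv = 0
    · simp [h0]
    have hgm' : (g.map (algebraMap k (v.adicCompletion k))).Monic := hgm.map _
    apply Polynomial.coeff_eq_zero_of_natDegree_lt
    have hdeg : (hloc v hv).natDegree ≤ d :=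
      Polynomial.natDegree_le_iff_degree_le.mpr (hlocdeg v hv)
    rw [hq, Polynomial.natDegree_mul hgm'.ne_zero h0, hgm.natDegree_map] at hdeg
    omega
  choose qv hq1 hq2 using hqv
  -- the sup of the valuations of the coefficients of g
  set Cv : (HeightOneSpectrum (NumberField.RingOfIntegers k)) → ℤₘ₀ :=
    fun v => (Finset.range (g.natDegree + 1)).sup fun i => v.valuation k (g.coeff i) with hCv
  have hCv1 : ∀ v, (1 : ℤₘ₀) ≤ Cv v := by
    intro v
    have h1 : v.valuation k (g.coeff g.natDegree) = 1 := by
      rw [hgm.coeff_natDegree, map_one]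
    rw [← h1]
    exact Finset.le_sup (f := fun i => v.valuation k (g.coeff i))
      (Finset.mem_range.mpr (Nat.lt_succ_self _))
  have hCv0 : ∀ v, Cv v ≠ 0 := by
    intro v h
    have h1 := hCv1 v
    rw [h] at h1
    simp at h1
  have hCvb : ∀ v i, v.valuation k (g.coeff i) ≤ Cv v := by
    intro v i
    rcases le_or_gt i g.natDegree with h | h
    · exact Finset.le_sup (f := fun i => v.valuation k (g.coeff i))
        (Finset.mem_range.mpr (by omega))
    · rw [Polynomial.coeff_eq_zero_of_natDegree_lt h, map_zero]
      exact zero_le'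
  -- tolerances and targets for the scalar approximation
  set εS : (HeightOneSpectrum (NumberField.RingOfIntegers k)) → ℤₘ₀ :=
    fun v => if h : v ∈ S then ε v h * (Cv v)⁻¹ else 1 with hεS
  have hεS0 : ∀ v, 0 < εS v := by
    intro v
    show 0 < if h : v ∈ S then ε v h * (Cv v)⁻¹ else 1
    split
    · exact zero_lt_iff.mpr (mul_ne_zero (hε v ‹_›).ne' (inv_ne_zero (hCv0 v)))
    · exact zero_lt_one
  have ha : ∀ j : ℕ, ∃ a : k, (∀ w, w ∉ S → w.valuation k a ≤ 1) ∧
      ∀ v ∈ S, Valued.v (algebraMap k (v.adicCompletion k) a -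
        (if h : v ∈ S then (qv v h).coeff j else 0)) < εS v :=
    fun j => scalar_strong_approx S (fun v => if h : v ∈ S then (qv v h).coeff j else 0) εS hεS0
  choose a ha1 ha2 using ha
  -- the global quotient polynomial
  set q : Polynomial k := ∑ j ∈ Finset.range (m + 1), Polynomial.C (a j) * Polynomial.X ^ j
    with hqdef
  have hqc : ∀ l, q.coeff l = if l < m + 1 then a l else 0 := by
    intro l
    rw [hqdef, Polynomial.finset_sum_coeff]
    simp [Polynomial.coeff_C_mul, Polynomial.coeff_X_pow, mul_ite, Finset.sum_ite_eq,
      Finset.mem_range]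
  have hqdeg : q.degree ≤ (m : ℕ) := by
    rw [hqdef]
    refine le_trans (Polynomial.degree_sum_le _ _) ?_
    refine Finset.sup_le fun j hj => ?_
    refine le_trans (Polynomial.degree_C_mul_X_pow_le _ _) ?_
    exact_mod_cast Nat.lt_succ_iff.mp (Finset.mem_range.mp hj)
  refine ⟨g * q, ?_, Dvd.intro q rfl, ?_, ?_⟩
  · -- degree bound
    refine le_trans (Polynomial.degree_mul_le _ _) ?_
    calc g.degree + q.degree ≤ (g.natDegree : WithBot ℕ) + (m : ℕ) :=
          add_le_add Polynomial.degree_le_natDegree hqdeg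
      _ ≤ (d : ℕ) := by
          rw [← Nat.cast_add, Nat.cast_le]
          omega
  · -- integrality
    intro j w hwS hwv0
    rw [Polynomial.coeff_mul]
    refine Valuation.map_sum_le _ fun p _ => ?_
    rw [map_mul]
    refine mul_le_one' (hgint _ w hwS hwv0) ?_
    rw [hqc]
    split
    · exact ha1 _ w hwS
    · rw [map_zero]; exact zero_le_one
  · -- approximation
    intro v hv j
    have hφval : ∀ z : k, Valued.v (algebraMap k (v.adicCompletion k) z) = v.valuation k z := by
      intro z
      rw [IsDedekindDomain.HeightOneSpectrum.algebraMap_adicCompletion]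
      exact IsDedekindDomain.HeightOneSpectrum.valuedAdicCompletion_eq_valuation' v z
    set φ := algebraMap k (v.adicCompletion k) with hφ
    have hrw : φ ((g * q).coeff j) - (hloc v hv).coeff j =
        (g.map φ * (q.map φ - qv v hv)).coeff j := by
      rw [mul_sub, Polynomial.coeff_sub, ← Polynomial.map_mul, Polynomial.coeff_map, hq1 v hv]
    rw [hrw, Polynomial.coeff_mul]
    refine Valuation.map_sum_lt _ (hε v hv).ne' fun p _ => ?_
    rw [map_mul]
    have hV1 : Valued.v ((g.map φ).coeff p.1) ≤ Cv v := by
      rw [Polynomial.coeff_map, hφval]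
      exact hCvb v p.1
    have hV2 : Valued.v ((q.map φ - qv v hv).coeff p.2) < ε v hv * (Cv v)⁻¹ := by
      rw [Polynomial.coeff_sub, Polynomial.coeff_map]
      rcases le_or_gt p.2 m with h2 | h2
      · have := ha2 p.2 v hv
        rw [dif_pos hv] at this
        rw [hqc, if_pos (by omega)]
        have hε' : εS v = ε v hv * (Cv v)⁻¹ := by
          show (if h : v ∈ S then ε v h * (Cv v)⁻¹ else 1) = _
          rw [dif_pos hv]
        rw [← hε']
        exact this
      · rw [hqc, if_neg (by omega), hq2 v hv p.2 h2, map_zero, sub_zero, map_zero]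
        exact zero_lt_iff.mpr (mul_ne_zero (hε v hv).ne' (inv_ne_zero (hCv0 v)))
    calc Valued.v ((g.map φ).coeff p.1) * Valued.v ((q.map φ - qv v hv).coeff p.2)
        < Cv v * (ε v hv * (Cv v)⁻¹) := mul_lt_mul_of_le_of_lt_of_nonneg_of_pos hV1 hV2 zero_le' (zero_lt_iff.mpr (hCv0 v))
      _ = ε v hv := by
          rw [mul_left_comm, mul_inv_cancel₀ (hCv0 v), mul_one]
end
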